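/- The nontrivial direction of cost decomposition by levels: an edge e = {u,v} belongs to E_T(t) (is cut at level t) if and only if t < r(u,v), where r(u,v) is the size of the minimal cluster of T containing both u and v; equivalently, the level-t partition into maximal clusters of size at most t separates u and v exactly when t < r(u,v). -/
import Mathlib


/-- A rooted binary tree whose leaves are labelled by elements of `α`.
A hierarchical clustering of a vertex set is such a tree whose leaf set is the vertex set. -/
inductive HCTree (α : Type) where
  | leaf : α → HCTree α
  | node : HCTree α → HCTree α → HCTree α

namespace HCTree

variable {α : Type} [DecidableEq α]

/-- The set of leaf labels of the tree. -/
def leaves : HCTree α → Finset α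
  | leaf v => {v}
  | node l r => l.leaves ∪ r.leaves

/-- The leaf set of the minimal subtree of `T` containing both `u` and `v`
(i.e. the cluster at the lowest common ancestor of `u` and `v`). -/
def cluster : HCTree α → α → α → Finset α
  | leaf w, _, _ => {w}
  | node l r, u, v =>
    if u ∈ l.leaves ∧ v ∈ l.leaves then l.cluster u v
    else if u ∈ r.leaves ∧ v ∈ r.leaves then r.cluster u v
    else l.leaves ∪ r.leaves

/-- A tree is proper if its leaf labels are distinct, i.e. the leaf sets of the two
children of every internal node are disjoint. -/
def proper : HCTree α → Prop
  | leaf _ => True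
  | node l r => Disjoint l.leaves r.leaves ∧ l.proper ∧ r.proper

end HCTree

namespace HCTree

variable {α : Type} [DecidableEq α]

/-- The level-`t` partition of the leaves: the maximal clusters of the tree of
size at most `t` (singleton leaves are always clusters). -/
def levelClusters (t : ℕ) : HCTree α → Finset (Finset α)
  | leaf v => {{v}}
  | node l r =>
    if (l.leaves ∪ r.leaves).card ≤ t then {l.leaves ∪ r.leaves}
    else l.levelClusters t ∪ r.levelClusters t

end HCTree


namespace HCTree
variable {α : Type} [DecidableEq α]

lemma cluster_subset_leaves (T : HCTree α) (u v : α) : T.cluster u v ⊆ T.leaves := by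
  induction T with
  | leaf w => simp [cluster, leaves]
  | node l r ihl ihr =>
    simp only [cluster, leaves]
    split
    · exact ihl.trans Finset.subset_union_left
    · split
      · exact ihr.trans Finset.subset_union_right
      · exact subset_rfl

lemma levelClusters_subset (T : HCTree α) (t : ℕ) {C : Finset α}
    (hC : C ∈ T.levelClusters t) : C ⊆ T.leaves := by
  induction T with
  | leaf w => simp_all [levelClusters, leaves]
  | node l r ihl ihr =>
    simp only [levelClusters, leaves] at hC ⊢
    split at hC
    · simp at hC; subst hC; exact subset_rfl
    · rcases Finset.mem_union.1 hC with h | h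
      · exact (ihl h).trans Finset.subset_union_left
      · exact (ihr h).trans Finset.subset_union_right

end HCTree

/-- an edge `{u,v}` is separated by the level-`t` partition into
maximal clusters of size at most `t` if and only if `t < r(u,v)`, where `r(u,v)`
is the size of the minimal cluster of `T` containing both `u` and `v`. -/
theorem separated_iff_lt_cluster_card {α : Type} [DecidableEq α]
    (T : HCTree α) (hT : T.proper) (t : ℕ) (u v : α)
    (hu : u ∈ T.leaves) (hv : v ∈ T.leaves) (huv : u ≠ v) :
    (∀ C ∈ T.levelClusters t, ¬(u ∈ C ∧ v ∈ C)) ↔ t < (T.cluster u v).card := by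
  induction T with
  | leaf w =>
    simp [HCTree.leaves] at hu hv; exact absurd (hu.trans hv.symm) huv
  | node l r ihl ihr =>
    obtain ⟨hdisj, hpl, hpr⟩ := hT
    simp only [HCTree.levelClusters, HCTree.cluster, HCTree.leaves] at hu hv ⊢
    by_cases hcard : (l.leaves ∪ r.leaves).card ≤ t
    · simp only [hcard, if_pos, Finset.mem_singleton]
      constructor
      · intro h; exact absurd ⟨hu, hv⟩ (h _ rfl)
      · intro h
        exfalso
        have hsub : (l.node r).cluster u v ⊆ l.leaves ∪ r.leaves :=
          HCTree.cluster_subset_leaves (l.node r) u v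
        have := Finset.card_le_card hsub
        simp only [HCTree.cluster] at this
        omega
    · simp only [hcard, if_neg, not_false_iff, Finset.mem_union]
      by_cases hul : u ∈ l.leaves
      · by_cases hvl : v ∈ l.leaves
        · rw [if_pos ⟨hul, hvl⟩]
          rw [← ihl hpl hul hvl]
          constructor
          · intro h C hC; exact h C (Or.inl hC)
          · rintro h C (hC | hC) ⟨hu', hv'⟩
            · exact h C hC ⟨hu', hv'⟩
            · exact Finset.disjoint_left.1 hdisj hul (HCTree.levelClusters_subset r t hC hu')
        · have hvr : v ∈ r.leaves := (Finset.mem_union.1 hv).resolve_left hvl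
          have hur : u ∉ r.leaves := fun h => Finset.disjoint_left.1 hdisj hul h
          rw [if_neg (fun h => hvl h.2), if_neg (fun h => hur h.1)]
          constructor
          · intro _; omega
          · rintro _ C (hC | hC) ⟨hu', hv'⟩
            · exact hvl (HCTree.levelClusters_subset l t hC hv')
            · exact hur (HCTree.levelClusters_subset r t hC hu')
      · have hur : u ∈ r.leaves := (Finset.mem_union.1 hu).resolve_left hul
        by_cases hvr : v ∈ r.leaves
        · have hvl : v ∉ l.leaves := fun h => Finset.disjoint_right.1 hdisj hvr h
          rw [if_neg (fun h => hul h.1), if_pos ⟨hur, hvr⟩]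
          rw [← ihr hpr hur hvr]
          constructor
          · intro h C hC; exact h C (Or.inr hC)
          · rintro h C (hC | hC) ⟨hu', hv'⟩
            · exact hul (HCTree.levelClusters_subset l t hC hu')
            · exact h C hC ⟨hu', hv'⟩
        · have hvl : v ∈ l.leaves := (Finset.mem_union.1 hv).resolve_right hvr
          rw [if_neg (fun h => hul h.1), if_neg (fun h => hvr h.2)]
          constructor
          · intro _; omega
          · rintro _ C (hC | hC) ⟨hu', hv'⟩
            · exact hul (HCTree.levelClusters_subset l t hC hu')
            · exact hvr (HCTree.levelClusters_subset r t hC hv')
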